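/- arXiv:2005.03552 — 12 statements merged into one kernel-verified Lean document; each statement's English description precedes it below -/
import Mathlib

section
/- Let (c_{i,j}), 0 ≤ i ≤ s, 1 ≤ j ≤ n, be any feasible family of reals, i.e., c_{0,j} = r_j for all j, c_{i,j} ≥ c_{i-1,j} + p_i for all 1 ≤ i ≤ s and all j, and c_{i,j} ≥ c_{i,j-q_i} + p_i for all 1 ≤ i ≤ s and all j > q_i. Then c_{i,j} ≥ c*_{i,j} for all 1 ≤ i ≤ s and 1 ≤ j ≤ n. -/
/-- Any feasible family of stage-wise completion times dominates the
lower-bound values `c*` defined by the recursion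
`c*_{0,j} = r_j`, `c*_{i,j} = c*_{i-1,j} + p_i` if `j ≤ q_i`,
`c*_{i,j} = max(c*_{i-1,j}, c*_{i,j-q_i}) + p_i` if `j > q_i`. -/
theorem feasible_family_ge_lower_bound
    (s n : ℕ) (hs : 1 ≤ s) (hn : 1 ≤ n)
    (p : ℕ → ℝ) (hp : ∀ i, 1 ≤ i → i ≤ s → 0 ≤ p i)
    (q : ℕ → ℕ) (hq : ∀ i, 1 ≤ i → i ≤ s → 1 ≤ q i)
    (r : ℕ → ℝ) (hr : ∀ j, 1 ≤ j → j < n → r j ≤ r (j + 1))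
    (cstar : ℕ → ℕ → ℝ)
    (hcstar0 : ∀ j, 1 ≤ j → j ≤ n → cstar 0 j = r j)
    (hcstarle : ∀ i j, 1 ≤ i → i ≤ s → 1 ≤ j → j ≤ n → j ≤ q i →
      cstar i j = cstar (i - 1) j + p i)
    (hcstargt : ∀ i j, 1 ≤ i → i ≤ s → 1 ≤ j → j ≤ n → q i < j →
      cstar i j = max (cstar (i - 1) j) (cstar i (j - q i)) + p i)
    (c : ℕ → ℕ → ℝ)
    (hc0 : ∀ j, 1 ≤ j → j ≤ n → c 0 j = r j)
    (hc1 : ∀ i j, 1 ≤ i → i ≤ s → 1 ≤ j → j ≤ n → c (i - 1) j + p i ≤ c i j)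
    (hc2 : ∀ i j, 1 ≤ i → i ≤ s → q i < j → j ≤ n → c i (j - q i) + p i ≤ c i j) :
    ∀ i j, 1 ≤ i → i ≤ s → 1 ≤ j → j ≤ n → cstar i j ≤ c i j := by
  intro i
  induction i with
  | zero => intro j h; omega
  | succ i ih =>
    intro j
    induction j using Nat.strong_induction_on with
    | _ j ihj =>
      intro _ hsle hj1 hjn
      have hci : cstar i j ≤ c i j := by
        rcases Nat.eq_zero_or_pos i with h0 | h1
        · subst h0; rw [hcstar0 j hj1 hjn, hc0 j hj1 hjn]
        · exact ih j h1 (by omega) hj1 hjn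
      have hp' : 0 ≤ p (i + 1) := hp _ (by omega) hsle
      have h1 := hc1 (i + 1) j (by omega) hsle hj1 hjn
      simp only [Nat.add_sub_cancel] at h1
      by_cases hq' : j ≤ q (i + 1)
      · rw [hcstarle (i + 1) j (by omega) hsle hj1 hjn hq']
        simp only [Nat.add_sub_cancel]
        linarith
      · push_neg at hq'
        rw [hcstargt (i + 1) j (by omega) hsle hj1 hjn hq']
        simp only [Nat.add_sub_cancel]
        have hq1 : 1 ≤ q (i + 1) := hq _ (by omega) hsle
        have hsub : cstar (i + 1) (j - q (i + 1)) ≤ c (i + 1) (j - q (i + 1)) :=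
          ihj (j - q (i + 1)) (by omega) (by omega) hsle (by omega) (by omega)
        have h2 := hc2 (i + 1) j (by omega) hsle hq' hjn
        have hmax : max (cstar i j) (cstar (i + 1) (j - q (i + 1))) ≤ c (i + 1) j - p (i + 1) :=
          max_le (by linarith) (by linarith)
        linarith
end

section
/- The family (c*_{i,j}) is itself feasible, i.e., c*_{0,j} = r_j for all j, c*_{i,j} ≥ c*_{i-1,j} + p_i for all 1 ≤ i ≤ s and all j, and c*_{i,j} ≥ c*_{i,j-q_i} + p_i for all 1 ≤ i ≤ s and all j > q_i. Consequently (c*_{i,j}) is the pointwise minimum among all feasible families: every family (c_{i,j}) satisfying these constraints has c_{i,j} ≥ c*_{i,j} for all 1 ≤ i ≤ s and 1 ≤ j ≤ n. (These values are the completion times of an optimal schedule of the corresponding proportionate flexible flow shop without batching, where each stage has q_i parallel non-batching machines.) -/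
/-- The lower-bound family `c*` is itself feasible, and it is the pointwise
minimum among all feasible families. -/
theorem lower_bound_feasible_and_pointwise_min
    (s n : ℕ) (hs : 1 ≤ s) (hn : 1 ≤ n)
    (p : ℕ → ℝ) (hp : ∀ i, 1 ≤ i → i ≤ s → 0 ≤ p i)
    (q : ℕ → ℕ) (hq : ∀ i, 1 ≤ i → i ≤ s → 1 ≤ q i)
    (r : ℕ → ℝ) (hr : ∀ j, 1 ≤ j → j < n → r j ≤ r (j + 1))
    (cstar : ℕ → ℕ → ℝ)
    (hcstar0 : ∀ j, 1 ≤ j → j ≤ n → cstar 0 j = r j)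
    (hcstarle : ∀ i j, 1 ≤ i → i ≤ s → 1 ≤ j → j ≤ n → j ≤ q i →
      cstar i j = cstar (i - 1) j + p i)
    (hcstargt : ∀ i j, 1 ≤ i → i ≤ s → 1 ≤ j → j ≤ n → q i < j →
      cstar i j = max (cstar (i - 1) j) (cstar i (j - q i)) + p i) :
    ((∀ j, 1 ≤ j → j ≤ n → cstar 0 j = r j) ∧
     (∀ i j, 1 ≤ i → i ≤ s → 1 ≤ j → j ≤ n → cstar (i - 1) j + p i ≤ cstar i j) ∧
     (∀ i j, 1 ≤ i → i ≤ s → q i < j → j ≤ n → cstar i (j - q i) + p i ≤ cstar i j)) ∧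
    (∀ c : ℕ → ℕ → ℝ,
      (∀ j, 1 ≤ j → j ≤ n → c 0 j = r j) →
      (∀ i j, 1 ≤ i → i ≤ s → 1 ≤ j → j ≤ n → c (i - 1) j + p i ≤ c i j) →
      (∀ i j, 1 ≤ i → i ≤ s → q i < j → j ≤ n → c i (j - q i) + p i ≤ c i j) →
      ∀ i j, 1 ≤ i → i ≤ s → 1 ≤ j → j ≤ n → cstar i j ≤ c i j) := by

  refine ⟨⟨hcstar0, ?_, ?_⟩, ?_⟩
  · intro i j hi his hj hjn
    by_cases h : j ≤ q i
    · rw [hcstarle i j hi his hj hjn h]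
    · rw [hcstargt i j hi his hj hjn (not_le.mp h)]
      have := le_max_left (cstar (i-1) j) (cstar i (j - q i))
      linarith
  · intro i j hi his hq' hjn
    have hj1 : 1 ≤ j := le_trans (hq i hi his) (le_of_lt hq')
    rw [hcstargt i j hi his hj1 hjn hq']
    have := le_max_right (cstar (i-1) j) (cstar i (j - q i))
    linarith
  · intro c hc0 hc1 hc2
    have key : ∀ i, i ≤ s → ∀ j, 1 ≤ j → j ≤ n → cstar i j ≤ c i j := by
      intro i
      induction i with
      | zero => intro _ j hj hjn; rw [hcstar0 j hj hjn, hc0 j hj hjn]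
      | succ i ih =>
        intro his
        have hi1 : 1 ≤ i + 1 := Nat.succ_le_succ (Nat.zero_le i)
        have hprev := ih (Nat.le_of_succ_le his)
        intro j
        induction j using Nat.strong_induction_on with
        | _ j ihj =>
          intro hj hjn
          by_cases h : j ≤ q (i+1)
          · rw [hcstarle (i+1) j hi1 his hj hjn h]
            have h1 := hc1 (i+1) j hi1 his hj hjn
            have h3 := hprev j hj hjn
            simp only [Nat.add_sub_cancel] at *
            linarith
          · push_neg at h
            rw [hcstargt (i+1) j hi1 his hj hjn h]
            have hq1 := hq (i+1) hi1 his
            have hjq1 : 1 ≤ j - q (i+1) := by omega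
            have hjqn : j - q (i+1) ≤ n := by omega
            have hjlt : j - q (i+1) < j := by omega
            have h1 := hc1 (i+1) j hi1 his hj hjn
            have h2 := hc2 (i+1) j hi1 his h hjn
            have h3 := hprev j hj hjn
            have h4 := ihj (j - q (i+1)) hjlt hjq1 hjqn
            simp only [Nat.add_sub_cancel] at *
            rcases le_total (cstar i j) (cstar (i+1) (j - q (i+1))) with hmx | hmx
            · rw [max_eq_right hmx]; linarith
            · rw [max_eq_left hmx]; linarith
    intro i j hi his hj hjn
    exact key i his j hj hjn
end

section
/- Assume additionally that r_j ≥ 0 for all 1 ≤ j ≤ n. Then for all 1 ≤ i ≤ s and 1 ≤ j ≤ n, the lower-bound values satisfy c*_{i,j} ≥ ⌈j/q_i⌉ · p_i. -/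
/-- If all release dates are nonnegative, then the lower-bound values satisfy
`c*_{i,j} ≥ ⌈j / q_i⌉ · p_i` for all `1 ≤ i ≤ s` and `1 ≤ j ≤ n`.
(Here `j ⌈/⌉ q i` is the ceiling of the natural division `j / q i`.) -/
theorem lower_bound_ge_ceil_div_mul_proc_time
    (s n : ℕ) (hs : 1 ≤ s) (hn : 1 ≤ n)
    (p : ℕ → ℝ) (hp : ∀ i, 1 ≤ i → i ≤ s → 0 ≤ p i)
    (q : ℕ → ℕ) (hq : ∀ i, 1 ≤ i → i ≤ s → 1 ≤ q i)
    (r : ℕ → ℝ) (hr : ∀ j, 1 ≤ j → j < n → r j ≤ r (j + 1))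
    (hr0 : ∀ j, 1 ≤ j → j ≤ n → 0 ≤ r j)
    (cstar : ℕ → ℕ → ℝ)
    (hcstar0 : ∀ j, 1 ≤ j → j ≤ n → cstar 0 j = r j)
    (hcstarle : ∀ i j, 1 ≤ i → i ≤ s → 1 ≤ j → j ≤ n → j ≤ q i →
      cstar i j = cstar (i - 1) j + p i)
    (hcstargt : ∀ i j, 1 ≤ i → i ≤ s → 1 ≤ j → j ≤ n → q i < j →
      cstar i j = max (cstar (i - 1) j) (cstar i (j - q i)) + p i) :
    ∀ i j, 1 ≤ i → i ≤ s → 1 ≤ j → j ≤ n →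
      ((j ⌈/⌉ q i : ℕ) : ℝ) * p i ≤ cstar i j := by
  -- nonnegativity of cstar
  have hnonneg : ∀ i, i ≤ s → ∀ j, 1 ≤ j → j ≤ n → 0 ≤ cstar i j := by
    intro i
    induction i with
    | zero => intro _ j hj1 hjn; rw [hcstar0 j hj1 hjn]; exact hr0 j hj1 hjn
    | succ i ih =>
      intro his j hj1 hjn
      have hi1 : 1 ≤ i + 1 := Nat.le_add_left 1 i
      have hprev : 0 ≤ cstar i j := ih (Nat.le_of_succ_le his) j hj1 hjn
      have hpnn : 0 ≤ p (i + 1) := hp _ hi1 his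
      by_cases hc : j ≤ q (i + 1)
      · rw [hcstarle (i+1) j hi1 his hj1 hjn hc]
        simpa using add_nonneg hprev hpnn
      · rw [hcstargt (i+1) j hi1 his hj1 hjn (lt_of_not_ge hc)]
        have : 0 ≤ max (cstar (i + 1 - 1) j) (cstar (i+1) (j - q (i+1))) := by
          simp only [Nat.add_sub_cancel]
          exact le_max_of_le_left hprev
        linarith
  intro i j hi1 his hj1 hjn
  induction j using Nat.strong_induction_on with
  | _ j IH =>
    have hqi : 1 ≤ q i := hq i hi1 his
    have hpnn : 0 ≤ p i := hp i hi1 his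
    by_cases hc : j ≤ q i
    · have hceil : j ⌈/⌉ q i = 1 := by
        rw [Nat.ceilDiv_eq_add_pred_div]
        have h1 : 1 * q i ≤ j + q i - 1 := by omega
        have h2 : j + q i - 1 < (1 + 1) * q i := by omega
        exact Nat.div_eq_of_lt_le h1 h2
      rw [hceil, hcstarle i j hi1 his hj1 hjn hc]
      have := hnonneg (i - 1) (by omega) j hj1 hjn
      push_cast
      linarith
    · have hlt : q i < j := lt_of_not_ge hc
      have hrec := IH (j - q i) (by omega) (by omega) (by omega)
      have hceil : j ⌈/⌉ q i = (j - q i) ⌈/⌉ q i + 1 := by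
        rw [Nat.ceilDiv_eq_add_pred_div, Nat.ceilDiv_eq_add_pred_div]
        have : j + q i - 1 = ((j - q i) + q i - 1) + q i := by omega
        rw [this, Nat.add_div_right _ (by omega)]
      rw [hceil, hcstargt i j hi1 his hj1 hjn hlt]
      have hmax : cstar i (j - q i) ≤ max (cstar (i - 1) j) (cstar i (j - q i)) :=
        le_max_right _ _
      push_cast
      linarith
end

section
/- For all 1 ≤ i ≤ s and all job indices 1 ≤ j ≤ j' ≤ n, the lower-bound values satisfy c*_{i,j'} ≥ c*_{i,j} + ⌊(j'−j)/q_i⌋ · p_i. -/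
/-- For all `1 ≤ i ≤ s` and job indices `1 ≤ j ≤ j' ≤ n`, the lower-bound
values satisfy `c*_{i,j'} ≥ c*_{i,j} + ⌊(j' − j) / q_i⌋ · p_i`.
(Here `(j' - j) / q i` is natural (floor) division.) -/
theorem lower_bound_floor_div_gap
    (s n : ℕ) (hs : 1 ≤ s) (hn : 1 ≤ n)
    (p : ℕ → ℝ) (hp : ∀ i, 1 ≤ i → i ≤ s → 0 ≤ p i)
    (q : ℕ → ℕ) (hq : ∀ i, 1 ≤ i → i ≤ s → 1 ≤ q i)
    (r : ℕ → ℝ) (hr : ∀ j, 1 ≤ j → j < n → r j ≤ r (j + 1))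
    (cstar : ℕ → ℕ → ℝ)
    (hcstar0 : ∀ j, 1 ≤ j → j ≤ n → cstar 0 j = r j)
    (hcstarle : ∀ i j, 1 ≤ i → i ≤ s → 1 ≤ j → j ≤ n → j ≤ q i →
      cstar i j = cstar (i - 1) j + p i)
    (hcstargt : ∀ i j, 1 ≤ i → i ≤ s → 1 ≤ j → j ≤ n → q i < j →
      cstar i j = max (cstar (i - 1) j) (cstar i (j - q i)) + p i) :
    ∀ i j j', 1 ≤ i → i ≤ s → 1 ≤ j → j ≤ j' → j' ≤ n →
      cstar i j + (((j' - j) / q i : ℕ) : ℝ) * p i ≤ cstar i j' := by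
  -- monotonicity of release dates
  have hrmono : ∀ j j', 1 ≤ j → j ≤ j' → j' ≤ n → r j ≤ r j' := by
    intro j j' h1 hle
    induction j', hle using Nat.le_induction with
    | base => intro _; exact le_refl _
    | succ k hk ih =>
      intro hkn
      exact le_trans (ih (by omega)) (hr k (by omega) (by omega))
  -- monotonicity of cstar in j
  have hmono : ∀ i, i ≤ s → ∀ j' j, 1 ≤ j → j ≤ j' → j' ≤ n →
      cstar i j ≤ cstar i j' := by
    intro i
    induction i with
    | zero =>
      intro _ j' j h1 hle hn'
      rw [hcstar0 j h1 (hle.trans hn'), hcstar0 j' (h1.trans hle) hn']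
      exact hrmono j j' h1 hle hn'
    | succ i ih =>
      intro his j'
      have hi1 : 1 ≤ i + 1 := by omega
      have hqi : 1 ≤ q (i + 1) := hq (i + 1) hi1 his
      induction j' using Nat.strong_induction_on with
      | _ j' sih =>
        intro j h1 hle hn'
        rcases eq_or_lt_of_le hle with rfl | hlt
        · exact le_refl _
        · by_cases hj'q : j' ≤ q (i + 1)
          · rw [hcstarle (i + 1) j hi1 his h1 (hle.trans hn') (hle.trans hj'q),
                hcstarle (i + 1) j' hi1 his (h1.trans hle) hn' hj'q]
            simp only [Nat.add_sub_cancel]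
            have h2 := ih (by omega) j' j h1 hle hn'
            linarith
          · push_neg at hj'q
            rw [hcstargt (i + 1) j' hi1 his (h1.trans hle) hn' hj'q]
            simp only [Nat.add_sub_cancel]
            by_cases hjq : j ≤ q (i + 1)
            · rw [hcstarle (i + 1) j hi1 his h1 (hle.trans hn') hjq]
              simp only [Nat.add_sub_cancel]
              have h2 := ih (by omega) j' j h1 hle hn'
              have h3 := le_max_left (cstar i j') (cstar (i + 1) (j' - q (i + 1)))
              linarith
            · push_neg at hjq
              rw [hcstargt (i + 1) j hi1 his h1 (hle.trans hn') hjq]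
              simp only [Nat.add_sub_cancel]
              have h2 := ih (by omega) j' j h1 hle hn'
              have h3 := sih (j' - q (i + 1)) (by omega) (j - q (i + 1))
                (by omega) (by omega) (by omega)
              have h4 : max (cstar i j) (cstar (i + 1) (j - q (i + 1))) ≤
                  max (cstar i j') (cstar (i + 1) (j' - q (i + 1))) :=
                max_le (le_trans h2 (le_max_left _ _))
                  (le_trans h3 (le_max_right _ _))
              linarith
  -- the batch step
  have hstep : ∀ i, 1 ≤ i → i ≤ s → ∀ j', q i < j' → j' ≤ n →
      cstar i (j' - q i) + p i ≤ cstar i j' := by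
    intro i hi1 his j' hq' hn'
    rw [hcstargt i j' hi1 his (by omega) hn' hq']
    have := le_max_right (cstar (i - 1) j') (cstar i (j' - q i))
    linarith
  -- main claim
  intro i j j' hi1 his h1 hle hn'
  induction j' using Nat.strong_induction_on generalizing j with
  | _ j' sih =>
    by_cases hcase : j' - j < q i
    · rw [Nat.div_eq_of_lt hcase]
      simpa using hmono i his j' j h1 hle hn'
    · push_neg at hcase
      have hqpos : 1 ≤ q i := hq i hi1 his
      have hq' : q i < j' := by omega
      have hdiv : (j' - j) / q i = (j' - q i - j) / q i + 1 := by
        have heq : j' - j = (j' - q i - j) + q i := by omega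
        rw [heq, Nat.add_div_right _ (by omega)]
      have hIH := sih (j' - q i) (by omega) j h1 (by omega) (by omega)
      have hst := hstep i hi1 his j' hq' hn'
      rw [hdiv]
      push_cast
      have hpi := hp i hi1 his
      linarith
end

section
/- Let (c_{i,j}) be a Never-Wait family, i.e., c_{0,j} = r_j for all j and for every 1 ≤ i ≤ s and 1 ≤ j ≤ n at least one of the following holds: (a) c_{i,j} ≤ c_{i-1,j} + 2·p_i, or (b) j > q_i and c_{i,j} ≤ c_{i,j-q_i} + p_i. Then for all 1 ≤ i ≤ s and 1 ≤ j ≤ n, c_{i,j} ≤ c*_{i,j} + Σ_{i'=1}^{i} p_{i'}. -/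
/-- Never-Wait bound: if `(c_{i,j})` is a Never-Wait family, i.e. `c_{0,j} = r_j`
and for every stage `i` and job `j` either (a) `c_{i,j} ≤ c_{i-1,j} + 2 p_i` or
(b) `j > q_i` and `c_{i,j} ≤ c_{i,j-q_i} + p_i`, then
`c_{i,j} ≤ c*_{i,j} + ∑_{i'=1}^{i} p_{i'}` for all `1 ≤ i ≤ s`, `1 ≤ j ≤ n`. -/
theorem never_wait_family_bound
    (s n : ℕ) (hs : 1 ≤ s) (hn : 1 ≤ n)
    (p : ℕ → ℝ) (hp : ∀ i, 1 ≤ i → i ≤ s → 0 ≤ p i)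
    (q : ℕ → ℕ) (hq : ∀ i, 1 ≤ i → i ≤ s → 1 ≤ q i)
    (r : ℕ → ℝ) (hr : ∀ j, 1 ≤ j → j < n → r j ≤ r (j + 1))
    (cstar : ℕ → ℕ → ℝ)
    (hcstar0 : ∀ j, 1 ≤ j → j ≤ n → cstar 0 j = r j)
    (hcstarle : ∀ i j, 1 ≤ i → i ≤ s → 1 ≤ j → j ≤ n → j ≤ q i →
      cstar i j = cstar (i - 1) j + p i)
    (hcstargt : ∀ i j, 1 ≤ i → i ≤ s → 1 ≤ j → j ≤ n → q i < j →
      cstar i j = max (cstar (i - 1) j) (cstar i (j - q i)) + p i)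
    (c : ℕ → ℕ → ℝ)
    (hc0 : ∀ j, 1 ≤ j → j ≤ n → c 0 j = r j)
    (hNW : ∀ i j, 1 ≤ i → i ≤ s → 1 ≤ j → j ≤ n →
      c i j ≤ c (i - 1) j + 2 * p i ∨ (q i < j ∧ c i j ≤ c i (j - q i) + p i)) :
    ∀ i j, 1 ≤ i → i ≤ s → 1 ≤ j → j ≤ n →
      c i j ≤ cstar i j + ∑ i' ∈ Finset.Icc 1 i, p i' := by
  have key : ∀ j, 1 ≤ j → j ≤ n → ∀ i, i ≤ s →
      c i j ≤ cstar i j + ∑ i' ∈ Finset.Icc 1 i, p i' := by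
    intro j
    induction j using Nat.strong_induction_on with
    | _ j ihj =>
      intro hj1 hjn i
      induction i with
      | zero =>
        intro _
        simp [hc0 j hj1 hjn, hcstar0 j hj1 hjn]
      | succ i ihi =>
        intro his
        have hi1 : 1 ≤ i + 1 := Nat.succ_le_succ (Nat.zero_le i)
        have hsum : ∑ i' ∈ Finset.Icc 1 (i+1), p i'
            = (∑ i' ∈ Finset.Icc 1 i, p i') + p (i+1) :=
          Finset.sum_Icc_succ_top hi1 p
        have hpnn := hp (i+1) hi1 his
        rcases hNW (i+1) j hi1 his hj1 hjn with h | ⟨hqj, h⟩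
        · have ih := ihi (Nat.le_of_succ_le his)
          have hstar : cstar i j + p (i+1) ≤ cstar (i+1) j := by
            rcases le_or_gt j (q (i+1)) with hle | hlt
            · rw [hcstarle (i+1) j hi1 his hj1 hjn hle]
              simp only [Nat.add_sub_cancel]
              exact le_refl _
            · rw [hcstargt (i+1) j hi1 his hj1 hjn hlt]
              simp only [Nat.add_sub_cancel]

              have := le_max_left (cstar i j) (cstar (i+1) (j - q (i+1)))
              linarith
          simp only [Nat.add_sub_cancel] at h
          rw [hsum]
          linarith
        · have hq1 : 1 ≤ q (i+1) := hq (i+1) hi1 his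
          have hj'1 : 1 ≤ j - q (i+1) := by omega
          have ih := ihj (j - q (i+1)) (by omega) hj'1 (by omega) (i+1) his
          have hstar : cstar (i+1) (j - q (i+1)) + p (i+1) ≤ cstar (i+1) j := by
            rw [hcstargt (i+1) j hi1 his hj1 hjn hqj]
            have := le_max_right (cstar ((i+1)-1) j) (cstar (i+1) (j - q (i+1)))
            linarith
          linarith
  intro i j hi his hj hjn
  exact key j hj hjn i his
end

section
/- Assume additionally r_j ≥ 0 for all j. Let (c_{i,j}) be a Never-Wait family and let (c'_{i,j}) be any feasible family. Then for every job 1 ≤ j ≤ n, c_{s,j} ≤ 2·c'_{s,j} − r_j; in particular c_{s,j} ≤ 2·c'_{s,j}, and hence max_{1≤j≤n} c_{s,j} ≤ 2·max_{1≤j≤n} c'_{s,j} and Σ_{j=1}^n c_{s,j} ≤ 2·Σ_{j=1}^n c'_{s,j}. (The Never-Wait algorithm is 2-competitive with respect to makespan and total completion time.) -/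
/-- 2-competitiveness of the Never-Wait algorithm for makespan and total
completion time: with nonnegative release dates, for a Never-Wait family `c`
and any feasible family `c'` we have `c_{s,j} ≤ 2 c'_{s,j} − r_j` for every
job `j`, hence `c_{s,j} ≤ 2 c'_{s,j}`, `max_j c_{s,j} ≤ 2 max_j c'_{s,j}` and
`∑_j c_{s,j} ≤ 2 ∑_j c'_{s,j}`. -/
theorem never_wait_two_competitive_makespan_total_completion
    (s n : ℕ) (hs : 1 ≤ s) (hn : 1 ≤ n)
    (p : ℕ → ℝ) (hp : ∀ i, 1 ≤ i → i ≤ s → 0 ≤ p i)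
    (q : ℕ → ℕ) (hq : ∀ i, 1 ≤ i → i ≤ s → 1 ≤ q i)
    (r : ℕ → ℝ) (hr : ∀ j, 1 ≤ j → j < n → r j ≤ r (j + 1))
    (hr0 : ∀ j, 1 ≤ j → j ≤ n → 0 ≤ r j)
    (c : ℕ → ℕ → ℝ)
    (hc0 : ∀ j, 1 ≤ j → j ≤ n → c 0 j = r j)
    (hNW : ∀ i j, 1 ≤ i → i ≤ s → 1 ≤ j → j ≤ n →
      c i j ≤ c (i - 1) j + 2 * p i ∨ (q i < j ∧ c i j ≤ c i (j - q i) + p i))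
    (c' : ℕ → ℕ → ℝ)
    (hc'0 : ∀ j, 1 ≤ j → j ≤ n → c' 0 j = r j)
    (hc'1 : ∀ i j, 1 ≤ i → i ≤ s → 1 ≤ j → j ≤ n → c' (i - 1) j + p i ≤ c' i j)
    (hc'2 : ∀ i j, 1 ≤ i → i ≤ s → q i < j → j ≤ n → c' i (j - q i) + p i ≤ c' i j) :
    (∀ j, 1 ≤ j → j ≤ n → c s j ≤ 2 * c' s j - r j) ∧
    (∀ j, 1 ≤ j → j ≤ n → c s j ≤ 2 * c' s j) ∧
    (Finset.Icc 1 n).sup' (Finset.nonempty_Icc.mpr hn) (fun j => c s j) ≤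
      2 * (Finset.Icc 1 n).sup' (Finset.nonempty_Icc.mpr hn) (fun j => c' s j) ∧
    ∑ j ∈ Finset.Icc 1 n, c s j ≤ 2 * ∑ j ∈ Finset.Icc 1 n, c' s j := by
  -- key invariant: c i j ≤ c' i j + ∑_{k=1}^i p k
  have key : ∀ i, i ≤ s → ∀ j, 1 ≤ j → j ≤ n →
      c i j ≤ c' i j + ∑ k ∈ Finset.Icc 1 i, p k := by
    intro i
    induction i with
    | zero =>
      intro _ j h1 h2
      simp [hc0 j h1 h2, hc'0 j h1 h2]
    | succ i ih =>
      intro his j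
      induction j using Nat.strong_induction_on with
      | _ j ihj =>
        intro hj1 hjn
        have hi1 : 1 ≤ i + 1 := by omega
        have hsum : ∑ k ∈ Finset.Icc 1 (i + 1), p k
            = (∑ k ∈ Finset.Icc 1 i, p k) + p (i + 1) :=
          Finset.sum_Icc_succ_top hi1 p
        rcases hNW (i + 1) j hi1 his hj1 hjn with h | ⟨hq', h⟩
        · have h1 := ih (by omega) j hj1 hjn
          have h2 := hc'1 (i + 1) j hi1 his hj1 hjn
          simp only [Nat.add_sub_cancel] at h h2
          rw [hsum]; linarith
        · have hq1 := hq (i + 1) hi1 his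
          have hlt : j - q (i + 1) < j := by omega
          have h1 := ihj (j - q (i + 1)) hlt (by omega) (by omega)
          have h2 := hc'2 (i + 1) j hi1 his hq' hjn
          linarith
  -- c' i j ≥ r j + ∑_{k=1}^i p k
  have low : ∀ i, i ≤ s → ∀ j, 1 ≤ j → j ≤ n →
      r j + ∑ k ∈ Finset.Icc 1 i, p k ≤ c' i j := by
    intro i
    induction i with
    | zero => intro _ j h1 h2; simp [hc'0 j h1 h2]
    | succ i ih =>
      intro his j h1 h2
      have hi1 : 1 ≤ i + 1 := by omega
      have hsum : ∑ k ∈ Finset.Icc 1 (i + 1), p k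
          = (∑ k ∈ Finset.Icc 1 i, p k) + p (i + 1) :=
        Finset.sum_Icc_succ_top hi1 p
      have ha := ih (by omega) j h1 h2
      have hb := hc'1 (i + 1) j hi1 his h1 h2
      simp only [Nat.add_sub_cancel] at hb
      rw [hsum]; linarith
  have main : ∀ j, 1 ≤ j → j ≤ n → c s j ≤ 2 * c' s j - r j := by
    intro j h1 h2
    have := key s le_rfl j h1 h2
    have := low s le_rfl j h1 h2
    linarith
  have main2 : ∀ j, 1 ≤ j → j ≤ n → c s j ≤ 2 * c' s j := by
    intro j h1 h2
    have := main j h1 h2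
    have := hr0 j h1 h2
    linarith
  refine ⟨main, main2, ?_, ?_⟩
  · apply Finset.sup'_le
    intro j hj
    rw [Finset.mem_Icc] at hj
    calc c s j ≤ 2 * c' s j := main2 j hj.1 hj.2
    _ ≤ 2 * (Finset.Icc 1 n).sup' (Finset.nonempty_Icc.mpr hn) (fun j => c' s j) := by
        have := Finset.le_sup' (fun j => c' s j) (Finset.mem_Icc.mpr hj)
        linarith
  · rw [Finset.mul_sum]
    apply Finset.sum_le_sum
    intro j hj
    rw [Finset.mem_Icc] at hj
    exact main2 j hj.1 hj.2
end

section
/- Let (c_{i,j}) be a Never-Wait family and let (c'_{i,j}) be any feasible family. Then for every job 1 ≤ j ≤ n, the flow times satisfy c_{s,j} − r_j ≤ 2·(c'_{s,j} − r_j); consequently max_{1≤j≤n}(c_{s,j} − r_j) ≤ 2·max_{1≤j≤n}(c'_{s,j} − r_j) and Σ_{j=1}^n (c_{s,j} − r_j) ≤ 2·Σ_{j=1}^n (c'_{s,j} − r_j). (The Never-Wait algorithm is 2-competitive with respect to maximum flow time and total flow time.) -/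
/-- 2-competitiveness of the Never-Wait algorithm for maximum flow time and
total flow time: for a Never-Wait family `c` and any feasible family `c'`,
`c_{s,j} − r_j ≤ 2 (c'_{s,j} − r_j)` for every job `j`, hence
`max_j (c_{s,j} − r_j) ≤ 2 max_j (c'_{s,j} − r_j)` and
`∑_j (c_{s,j} − r_j) ≤ 2 ∑_j (c'_{s,j} − r_j)`. -/
theorem never_wait_two_competitive_flow_time
    (s n : ℕ) (hs : 1 ≤ s) (hn : 1 ≤ n)
    (p : ℕ → ℝ) (hp : ∀ i, 1 ≤ i → i ≤ s → 0 ≤ p i)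
    (q : ℕ → ℕ) (hq : ∀ i, 1 ≤ i → i ≤ s → 1 ≤ q i)
    (r : ℕ → ℝ) (hr : ∀ j, 1 ≤ j → j < n → r j ≤ r (j + 1))
    (c : ℕ → ℕ → ℝ)
    (hc0 : ∀ j, 1 ≤ j → j ≤ n → c 0 j = r j)
    (hNW : ∀ i j, 1 ≤ i → i ≤ s → 1 ≤ j → j ≤ n →
      c i j ≤ c (i - 1) j + 2 * p i ∨ (q i < j ∧ c i j ≤ c i (j - q i) + p i))
    (c' : ℕ → ℕ → ℝ)
    (hc'0 : ∀ j, 1 ≤ j → j ≤ n → c' 0 j = r j)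
    (hc'1 : ∀ i j, 1 ≤ i → i ≤ s → 1 ≤ j → j ≤ n → c' (i - 1) j + p i ≤ c' i j)
    (hc'2 : ∀ i j, 1 ≤ i → i ≤ s → q i < j → j ≤ n → c' i (j - q i) + p i ≤ c' i j) :
    (∀ j, 1 ≤ j → j ≤ n → c s j - r j ≤ 2 * (c' s j - r j)) ∧
    (Finset.Icc 1 n).sup' (Finset.nonempty_Icc.mpr hn) (fun j => c s j - r j) ≤
      2 * (Finset.Icc 1 n).sup' (Finset.nonempty_Icc.mpr hn) (fun j => c' s j - r j) ∧
    ∑ j ∈ Finset.Icc 1 n, (c s j - r j) ≤ 2 * ∑ j ∈ Finset.Icc 1 n, (c' s j - r j) := by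
  -- total processing time of the first i stages
  set P : ℕ → ℝ := fun i => ∑ k ∈ Finset.Icc 1 i, p k with hPdef
  have hP0 : P 0 = 0 := by simp [hPdef]
  have hPsucc : ∀ i : ℕ, P (i + 1) = P i + p (i + 1) := by
    intro i
    simpa [hPdef] using Finset.sum_Icc_succ_top (Nat.one_le_iff_ne_zero.mpr (Nat.succ_ne_zero i)) p
  -- lower bound on feasible completion times
  have hflow : ∀ i, i ≤ s → ∀ j, 1 ≤ j → j ≤ n → r j + P i ≤ c' i j := by
    intro i
    induction i with
    | zero => intro _ j hj1 hjn; rw [hc'0 j hj1 hjn, hP0]; linarith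
    | succ i ih =>
      intro his j hj1 hjn
      have h1 := hc'1 (i + 1) j (Nat.succ_le_succ (Nat.zero_le i)) his hj1 hjn
      have h2 := ih (Nat.le_of_succ_le his) j hj1 hjn
      rw [Nat.add_sub_cancel] at h1
      rw [hPsucc]
      linarith
  have key : ∀ i, i ≤ s → ∀ j, 1 ≤ j → j ≤ n → c i j ≤ c' i j + P i := by
    intro i
    induction i with
    | zero =>
      intro _ j hj1 hjn
      rw [hc0 j hj1 hjn, hc'0 j hj1 hjn, hP0]; linarith
    | succ i ih =>
      intro his j
      induction j using Nat.strong_induction_on with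
      | _ j ihj =>
        intro hj1 hjn
        have hi1 : 1 ≤ i + 1 := Nat.succ_le_succ (Nat.zero_le i)
        rcases hNW (i + 1) j hi1 his hj1 hjn with ha | ⟨hqj, hb⟩
        · rw [Nat.add_sub_cancel] at ha
          have h1 := ih (Nat.le_of_succ_le his) j hj1 hjn
          have h2 := hc'1 (i + 1) j hi1 his hj1 hjn
          rw [Nat.add_sub_cancel] at h2
          rw [hPsucc]
          linarith
        · have hjq1 : 1 ≤ j - q (i + 1) := Nat.le_sub_of_add_le (by omega)
          have hjqn : j - q (i + 1) ≤ n := le_trans (Nat.sub_le _ _) hjn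
          have hlt : j - q (i + 1) < j := by
            have := hq (i + 1) hi1 his
            omega
          have h1 := ihj (j - q (i + 1)) hlt hjq1 hjqn
          have h2 := hc'2 (i + 1) j hi1 his hqj hjn
          linarith
  -- pointwise bound
  have hpt : ∀ j, 1 ≤ j → j ≤ n → c s j - r j ≤ 2 * (c' s j - r j) := by
    intro j hj1 hjn
    have h1 := key s le_rfl j hj1 hjn
    have h2 := hflow s le_rfl j hj1 hjn
    linarith
  refine ⟨hpt, ?_, ?_⟩
  · apply Finset.sup'_le
    intro j hj
    rw [Finset.mem_Icc] at hj
    have h1 := hpt j hj.1 hj.2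
    have h2 : c' s j - r j ≤
        (Finset.Icc 1 n).sup' (Finset.nonempty_Icc.mpr hn) (fun j => c' s j - r j) :=
      Finset.le_sup' (fun j => c' s j - r j) (Finset.mem_Icc.mpr hj)
    linarith
  · rw [Finset.mul_sum]
    apply Finset.sum_le_sum
    intro j hj
    rw [Finset.mem_Icc] at hj
    exact hpt j hj.1 hj.2
end

section
/- Assume additionally r_j ≥ 0 for all j and p_s > 0. Let (c_{i,j}) be a Never-Wait family and let (c'_{i,j}) be any feasible family. Then c_{s,n} ≤ (1 + (Σ_{i=1}^{s} p_i)/(⌈n/q_s⌉ · p_s)) · c'_{s,n}. In particular, with respect to the makespan, the competitive ratio of the Never-Wait algorithm tends to 1 as the number of jobs n tends to infinity. -/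
/-- Asymptotic competitiveness of the Never-Wait algorithm with respect to the
makespan: with nonnegative release dates and `p_s > 0`, for a Never-Wait
family `c` and any feasible family `c'`,
`c_{s,n} ≤ (1 + (∑_{i=1}^{s} p_i) / (⌈n/q_s⌉ · p_s)) · c'_{s,n}`.
In particular the competitive ratio tends to `1` as `n → ∞`. -/
theorem never_wait_asymptotic_makespan_ratio
    (s n : ℕ) (hs : 1 ≤ s) (hn : 1 ≤ n)
    (p : ℕ → ℝ) (hp : ∀ i, 1 ≤ i → i ≤ s → 0 ≤ p i) (hps : 0 < p s)
    (q : ℕ → ℕ) (hq : ∀ i, 1 ≤ i → i ≤ s → 1 ≤ q i)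
    (r : ℕ → ℝ) (hr : ∀ j, 1 ≤ j → j < n → r j ≤ r (j + 1))
    (hr0 : ∀ j, 1 ≤ j → j ≤ n → 0 ≤ r j)
    (c : ℕ → ℕ → ℝ)
    (hc0 : ∀ j, 1 ≤ j → j ≤ n → c 0 j = r j)
    (hNW : ∀ i j, 1 ≤ i → i ≤ s → 1 ≤ j → j ≤ n →
      c i j ≤ c (i - 1) j + 2 * p i ∨ (q i < j ∧ c i j ≤ c i (j - q i) + p i))
    (c' : ℕ → ℕ → ℝ)
    (hc'0 : ∀ j, 1 ≤ j → j ≤ n → c' 0 j = r j)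
    (hc'1 : ∀ i j, 1 ≤ i → i ≤ s → 1 ≤ j → j ≤ n → c' (i - 1) j + p i ≤ c' i j)
    (hc'2 : ∀ i j, 1 ≤ i → i ≤ s → q i < j → j ≤ n → c' i (j - q i) + p i ≤ c' i j) :
    c s n ≤
      (1 + (∑ i ∈ Finset.Icc 1 s, p i) / (((n ⌈/⌉ q s : ℕ) : ℝ) * p s)) * c' s n := by
  set P : ℝ := ∑ i ∈ Finset.Icc 1 s, p i with hP
  have hP0 : 0 ≤ P := Finset.sum_nonneg fun i hi => by
    rw [Finset.mem_Icc] at hi; exact hp i hi.1 hi.2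
  -- upper bound: c i j ≤ c' i j + ∑_{k≤i} p k
  have key : ∀ i, i ≤ s → ∀ j, 1 ≤ j → j ≤ n →
      c i j ≤ c' i j + ∑ k ∈ Finset.Icc 1 i, p k := by
    intro i
    induction i with
    | zero => intro _ j h1 h2; simp [hc0 j h1 h2, hc'0 j h1 h2]
    | succ i ih =>
      intro his
      have ihi := ih (Nat.le_of_succ_le his)
      intro j
      induction j using Nat.strong_induction_on with
      | _ j jih =>
        intro hj1 hjn
        have hi1 : 1 ≤ i + 1 := Nat.succ_le_succ (Nat.zero_le i)
        have hsum : ∑ k ∈ Finset.Icc 1 (i + 1), p k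
            = (∑ k ∈ Finset.Icc 1 i, p k) + p (i + 1) :=
          Finset.sum_Icc_succ_top hi1 p
        rcases hNW (i + 1) j hi1 his hj1 hjn with h | ⟨hqj, h⟩
        · have h' : c (i + 1) j ≤ c i j + 2 * p (i + 1) := by simpa using h
          have h1 := ihi j hj1 hjn
          have h2 : c' i j + p (i + 1) ≤ c' (i + 1) j := by
            simpa using hc'1 (i + 1) j hi1 his hj1 hjn
          have hpp : 0 ≤ p (i + 1) := hp (i + 1) hi1 his
          rw [hsum]; linarith
        · have hq1 : 1 ≤ q (i + 1) := hq (i + 1) hi1 his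
          have hlt : j - q (i + 1) < j := by omega
          have hge1 : 1 ≤ j - q (i + 1) := by omega
          have hle : j - q (i + 1) ≤ n := by omega
          have h1 := jih _ hlt hge1 hle
          have h2 := hc'2 (i + 1) j hi1 his hqj hjn
          rw [hsum] at h1 ⊢
          linarith
  -- c' i j ≥ r j
  have mono : ∀ i, i ≤ s → ∀ j, 1 ≤ j → j ≤ n → r j ≤ c' i j := by
    intro i
    induction i with
    | zero => intro _ j h1 h2; rw [hc'0 j h1 h2]
    | succ i ih =>
      intro his j h1 h2
      have h3 : c' i j + p (i + 1) ≤ c' (i + 1) j := by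
        simpa using hc'1 (i + 1) j (Nat.succ_le_succ (Nat.zero_le i)) his h1 h2
      have h4 := ih (Nat.le_of_succ_le his) j h1 h2
      have h5 : 0 ≤ p (i + 1) := hp (i + 1) (Nat.succ_le_succ (Nat.zero_le i)) his
      linarith
  -- lower bound at stage s
  have lower : ∀ j, 1 ≤ j → j ≤ n → ((j ⌈/⌉ q s : ℕ) : ℝ) * p s ≤ c' s j := by
    intro j
    induction j using Nat.strong_induction_on with
    | _ j jih =>
      intro hj1 hjn
      have hqs : 1 ≤ q s := hq s hs (le_refl s)
      by_cases hcase : j ≤ q s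
      · have hcd : j ⌈/⌉ q s = 1 := by
          rw [Nat.ceilDiv_eq_add_pred_div]
          exact Nat.div_eq_of_lt_le (by omega) (by omega)
        have h1 : c' (s - 1) j + p s ≤ c' s j := hc'1 s j hs (le_refl s) hj1 hjn
        have h2 : r j ≤ c' (s - 1) j := mono (s - 1) (by omega) j hj1 hjn
        have h3 := hr0 j hj1 hjn
        rw [hcd]; push_cast; linarith
      · push_neg at hcase
        have hlt : j - q s < j := by omega
        have hge1 : 1 ≤ j - q s := by omega
        have hle : j - q s ≤ n := by omega
        have h1 := jih _ hlt hge1 hle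
        have h2 := hc'2 s j hs (le_refl s) hcase hjn
        have hcd : j ⌈/⌉ q s = (j - q s) ⌈/⌉ q s + 1 := by
          rw [Nat.ceilDiv_eq_add_pred_div, Nat.ceilDiv_eq_add_pred_div]
          have : j + q s - 1 = (j - q s + q s - 1) + q s := by omega
          rw [this, Nat.add_div_right _ (by omega)]
        rw [hcd]; push_cast; linarith
  have hcn := key s (le_refl s) n hn (le_refl n)
  have hlow := lower n hn (le_refl n)
  have hK1 : 1 ≤ (n ⌈/⌉ q s : ℕ) := by
    have hqs : 1 ≤ q s := hq s hs (le_refl s)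
    rw [Nat.ceilDiv_eq_add_pred_div]
    exact Nat.one_le_div_iff (by omega) |>.2 (by omega)
  have hD : (0:ℝ) < ((n ⌈/⌉ q s : ℕ) : ℝ) * p s := by
    have : (1:ℝ) ≤ ((n ⌈/⌉ q s : ℕ) : ℝ) := by exact_mod_cast hK1
    nlinarith
  set D : ℝ := ((n ⌈/⌉ q s : ℕ) : ℝ) * p s with hDdef
  have hfrac : P ≤ P / D * c' s n := by
    rw [div_mul_eq_mul_div, le_div_iff₀ hD]
    nlinarith
  have : (1 + P / D) * c' s n = c' s n + P / D * c' s n := by ring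
  rw [this]
  linarith
end

section
/- Suppose s = 2. Let c_{1,j} (1 ≤ j ≤ n) be reals such that for every j at least one of the following holds: (a) c_{1,j} ≤ r_j + 2·p_1, or (b) j > q_1 and c_{1,j} ≤ c_{1,j−q_1} + p_1. Then c_{1,j} ≤ c*_{1,j} + p_1 for all 1 ≤ j ≤ n. (These hypotheses hold for the first-stage completion times produced by the t-Switch algorithm, which starts jobs at stage 1 only at starting instants spaced p_1 apart and starts as many jobs as possible at each starting instant.) -/
/-- First-stage bound for the t-Switch algorithm in a two-stage PFFB:
if `c_{1,j}` satisfies, for every job `j`, either (a) `c_{1,j} ≤ r_j + 2 p_1`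
or (b) `j > q_1` and `c_{1,j} ≤ c_{1,j−q_1} + p_1`, then
`c_{1,j} ≤ c*_{1,j} + p_1` for all `1 ≤ j ≤ n`. -/
theorem t_switch_first_stage_bound
    (n : ℕ) (hn : 1 ≤ n)
    (p : ℕ → ℝ) (hp : ∀ i, 1 ≤ i → i ≤ 2 → 0 ≤ p i)
    (q : ℕ → ℕ) (hq : ∀ i, 1 ≤ i → i ≤ 2 → 1 ≤ q i)
    (r : ℕ → ℝ) (hr : ∀ j, 1 ≤ j → j < n → r j ≤ r (j + 1))
    (cstar : ℕ → ℕ → ℝ)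
    (hcstar0 : ∀ j, 1 ≤ j → j ≤ n → cstar 0 j = r j)
    (hcstarle : ∀ i j, 1 ≤ i → i ≤ 2 → 1 ≤ j → j ≤ n → j ≤ q i →
      cstar i j = cstar (i - 1) j + p i)
    (hcstargt : ∀ i j, 1 ≤ i → i ≤ 2 → 1 ≤ j → j ≤ n → q i < j →
      cstar i j = max (cstar (i - 1) j) (cstar i (j - q i)) + p i)
    (c1 : ℕ → ℝ)
    (hc1 : ∀ j, 1 ≤ j → j ≤ n →
      c1 j ≤ r j + 2 * p 1 ∨ (q 1 < j ∧ c1 j ≤ c1 (j - q 1) + p 1)) :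
    ∀ j, 1 ≤ j → j ≤ n → c1 j ≤ cstar 1 j + p 1 := by

  have hp1 : (0:ℝ) ≤ p 1 := hp 1 le_rfl (by norm_num)
  have key : ∀ j, 1 ≤ j → j ≤ n → r j + p 1 ≤ cstar 1 j := by
    intro j h1 h2
    by_cases hle : j ≤ q 1
    · rw [hcstarle 1 j le_rfl (by norm_num) h1 h2 hle, hcstar0 j h1 h2]
    · push_neg at hle
      rw [hcstargt 1 j le_rfl (by norm_num) h1 h2 hle, hcstar0 j h1 h2]
      exact add_le_add_left (le_max_left _ _) _
  intro j
  induction j using Nat.strong_induction_on with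
  | _ j ih =>
    intro h1 h2
    rcases hc1 j h1 h2 with ha | ⟨hb1, hb2⟩
    · have := key j h1 h2
      linarith
    · have hq1 : 1 ≤ q 1 := hq 1 le_rfl (by norm_num)
      have hj1 : 1 ≤ j - q 1 := by omega
      have hj2 : j - q 1 ≤ n := by omega
      have hlt : j - q 1 < j := by omega
      have hih := ih (j - q 1) hlt hj1 hj2
      have hmono : cstar 1 (j - q 1) + p 1 ≤ cstar 1 j := by
        rw [hcstargt 1 j le_rfl (by norm_num) h1 h2 hb1]
        exact add_le_add_left (le_max_right _ _) _
      linarith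
end

section
/- Suppose s = 2, r_j ≥ 0 for all j, and let φ = (1+√5)/2 and t = φ·p_1 + (φ−1)·p_2. Let c_{1,j} and c_{2,j} (1 ≤ j ≤ n) be reals such that j ↦ c_{1,j} is nondecreasing and such that for every j with c_{1,j} ≤ t at least one of the following holds: (a) c_{2,j} = t + p_2, or (b) j > q_2 and c_{2,j} ≤ c_{2,j−q_2} + p_2. Then for every j with c_{1,j} ≤ t, c_{2,j} ≤ c*_{2,j} + (φ − 1)·(p_1 + p_2). -/
/-- Second-stage bound for jobs finishing stage one early in the t-Switch
algorithm: with `φ = (1+√5)/2` and `t = φ p_1 + (φ−1) p_2`, if `c_{1,·}` is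
nondecreasing and every job `j` with `c_{1,j} ≤ t` satisfies either
(a) `c_{2,j} = t + p_2` or (b) `j > q_2` and `c_{2,j} ≤ c_{2,j−q_2} + p_2`,
then every such job satisfies `c_{2,j} ≤ c*_{2,j} + (φ − 1)(p_1 + p_2)`. -/
theorem t_switch_second_stage_early_bound
    (n : ℕ) (hn : 1 ≤ n)
    (p : ℕ → ℝ) (hp : ∀ i, 1 ≤ i → i ≤ 2 → 0 ≤ p i)
    (q : ℕ → ℕ) (hq : ∀ i, 1 ≤ i → i ≤ 2 → 1 ≤ q i)
    (r : ℕ → ℝ) (hr : ∀ j, 1 ≤ j → j < n → r j ≤ r (j + 1))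
    (hr0 : ∀ j, 1 ≤ j → j ≤ n → 0 ≤ r j)
    (cstar : ℕ → ℕ → ℝ)
    (hcstar0 : ∀ j, 1 ≤ j → j ≤ n → cstar 0 j = r j)
    (hcstarle : ∀ i j, 1 ≤ i → i ≤ 2 → 1 ≤ j → j ≤ n → j ≤ q i →
      cstar i j = cstar (i - 1) j + p i)
    (hcstargt : ∀ i j, 1 ≤ i → i ≤ 2 → 1 ≤ j → j ≤ n → q i < j →
      cstar i j = max (cstar (i - 1) j) (cstar i (j - q i)) + p i)
    (φ : ℝ) (hφ : φ = (1 + Real.sqrt 5) / 2)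
    (t : ℝ) (ht : t = φ * p 1 + (φ - 1) * p 2)
    (c1 c2 : ℕ → ℝ)
    (hc1mono : ∀ j j', 1 ≤ j → j ≤ j' → j' ≤ n → c1 j ≤ c1 j')
    (hc2 : ∀ j, 1 ≤ j → j ≤ n → c1 j ≤ t →
      c2 j = t + p 2 ∨ (q 2 < j ∧ c2 j ≤ c2 (j - q 2) + p 2)) :
    ∀ j, 1 ≤ j → j ≤ n → c1 j ≤ t →
      c2 j ≤ cstar 2 j + (φ - 1) * (p 1 + p 2) := by
  have h1lb : ∀ j, 1 ≤ j → j ≤ n → r j + p 1 ≤ cstar 1 j := by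
    intro j hj hjn
    by_cases h : j ≤ q 1
    · rw [hcstarle 1 j le_rfl one_le_two hj hjn h]
      norm_num
      simp [hcstar0 j hj hjn]
    · have h0 : cstar (1 - 1) j = r j := hcstar0 j hj hjn
      rw [hcstargt 1 j le_rfl one_le_two hj hjn (not_le.mp h), h0]
      have h1 := le_max_left (r j) (cstar 1 (j - q 1))
      linarith
  have h2lb : ∀ j, 1 ≤ j → j ≤ n → cstar 1 j + p 2 ≤ cstar 2 j := by
    intro j hj hjn
    by_cases h : j ≤ q 2
    · rw [hcstarle 2 j one_le_two le_rfl hj hjn h]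
    · rw [hcstargt 2 j one_le_two le_rfl hj hjn (not_le.mp h)]
      have := le_max_left (cstar (2 - 1) j) (cstar 2 (j - q 2))
      linarith
  intro j
  induction j using Nat.strong_induction_on with
  | _ j ih =>
    intro hj hjn hc1t
    rcases hc2 j hj hjn hc1t with ha | ⟨hqj, hb⟩
    · have hrj := hr0 j hj hjn
      have h1 := h1lb j hj hjn
      have h2 := h2lb j hj hjn
      have hring : (φ - 1) * (p 1 + p 2) = φ * p 1 + (φ - 1) * p 2 + p 2 - (p 1 + p 2) := by
        ring
      rw [ha, ht]
      linarith
    · have hq2 : 1 ≤ q 2 := hq 2 one_le_two le_rfl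
      have hj' : 1 ≤ j - q 2 := by omega
      have hjn' : j - q 2 ≤ n := by omega
      have hlt : j - q 2 < j := by omega
      have hc1' : c1 (j - q 2) ≤ t :=
        le_trans (hc1mono (j - q 2) j hj' (by omega) hjn) hc1t
      have hih := ih (j - q 2) hlt hj' hjn' hc1'
      have hrec : cstar 2 (j - q 2) + p 2 ≤ cstar 2 j := by
        rw [hcstargt 2 j one_le_two le_rfl hj hjn hqj]
        have := le_max_right (cstar (2 - 1) j) (cstar 2 (j - q 2))
        linarith
      linarith
end

section
/- Suppose s = 2, r_j ≥ 0 for all j, and let φ = (1+√5)/2 and t = φ·p_1 + (φ−1)·p_2. Let c_{1,j} and c_{2,j} (1 ≤ j ≤ n) be reals such that: (i) j ↦ c_{1,j} is nondecreasing; (ii) for every j, either c_{1,j} ≤ r_j + 2·p_1, or j > q_1 and c_{1,j} ≤ c_{1,j−q_1} + p_1; (iii) for every j with c_{1,j} ≤ t, either c_{2,j} = t + p_2, or j > q_2 and c_{2,j} ≤ c_{2,j−q_2} + p_2; (iv) for every j with c_{1,j} > t, either c_{2,j} ≤ c_{1,j} + 2·p_2, or j > q_2 and c_{2,j} ≤ c_{2,j−q_2}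 + p_2. Then c_{2,j} ≤ c*_{2,j} + p_1 + p_2 for all 1 ≤ j ≤ n. -/
/-- Second-stage bound for all jobs in the t-Switch algorithm: with
`φ = (1+√5)/2` and `t = φ p_1 + (φ−1) p_2`, under hypotheses (i)–(iv) on the
completion times `c_{1,·}, c_{2,·}` produced by the t-Switch algorithm,
`c_{2,j} ≤ c*_{2,j} + p_1 + p_2` for all `1 ≤ j ≤ n`. -/
theorem t_switch_second_stage_bound
    (n : ℕ) (hn : 1 ≤ n)
    (p : ℕ → ℝ) (hp : ∀ i, 1 ≤ i → i ≤ 2 → 0 ≤ p i)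
    (q : ℕ → ℕ) (hq : ∀ i, 1 ≤ i → i ≤ 2 → 1 ≤ q i)
    (r : ℕ → ℝ) (hr : ∀ j, 1 ≤ j → j < n → r j ≤ r (j + 1))
    (hr0 : ∀ j, 1 ≤ j → j ≤ n → 0 ≤ r j)
    (cstar : ℕ → ℕ → ℝ)
    (hcstar0 : ∀ j, 1 ≤ j → j ≤ n → cstar 0 j = r j)
    (hcstarle : ∀ i j, 1 ≤ i → i ≤ 2 → 1 ≤ j → j ≤ n → j ≤ q i →
      cstar i j = cstar (i - 1) j + p i)
    (hcstargt : ∀ i j, 1 ≤ i → i ≤ 2 → 1 ≤ j → j ≤ n → q i < j →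
      cstar i j = max (cstar (i - 1) j) (cstar i (j - q i)) + p i)
    (φ : ℝ) (hφ : φ = (1 + Real.sqrt 5) / 2)
    (t : ℝ) (ht : t = φ * p 1 + (φ - 1) * p 2)
    (c1 c2 : ℕ → ℝ)
    (hc1mono : ∀ j j', 1 ≤ j → j ≤ j' → j' ≤ n → c1 j ≤ c1 j')
    (hc1 : ∀ j, 1 ≤ j → j ≤ n →
      c1 j ≤ r j + 2 * p 1 ∨ (q 1 < j ∧ c1 j ≤ c1 (j - q 1) + p 1))
    (hc2early : ∀ j, 1 ≤ j → j ≤ n → c1 j ≤ t →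
      c2 j = t + p 2 ∨ (q 2 < j ∧ c2 j ≤ c2 (j - q 2) + p 2))
    (hc2late : ∀ j, 1 ≤ j → j ≤ n → t < c1 j →
      c2 j ≤ c1 j + 2 * p 2 ∨ (q 2 < j ∧ c2 j ≤ c2 (j - q 2) + p 2)) :
    ∀ j, 1 ≤ j → j ≤ n → c2 j ≤ cstar 2 j + p 1 + p 2 := by
  have hp1 : 0 ≤ p 1 := hp 1 le_rfl (by norm_num)
  have hp2 : 0 ≤ p 2 := hp 2 (by norm_num) le_rfl
  have hq1 : 1 ≤ q 1 := hq 1 le_rfl (by norm_num)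
  have hq2 : 1 ≤ q 2 := hq 2 (by norm_num) le_rfl
  have hsqrt : Real.sqrt 5 ≤ 3 := by
    have : (Real.sqrt 5) ^ 2 = 5 := Real.sq_sqrt (by norm_num)
    nlinarith [Real.sqrt_nonneg 5]
  have hφ2 : φ ≤ 2 := by rw [hφ]; linarith
  -- lower bound on cstar 1
  have hcs1 : ∀ j, 1 ≤ j → j ≤ n → r j + p 1 ≤ cstar 1 j := by
    intro j h1 h2
    rcases le_or_gt j (q 1) with h | h
    · rw [hcstarle 1 j le_rfl (by norm_num) h1 h2 h]
      simp [hcstar0 j h1 h2]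
    · have hrec := hcstargt 1 j le_rfl (by norm_num) h1 h2 h
      norm_num [hcstar0 j h1 h2] at hrec
      have := le_max_left (r j) (cstar 1 (j - q 1))
      linarith
  have hcs2 : ∀ j, 1 ≤ j → j ≤ n → cstar 1 j + p 2 ≤ cstar 2 j := by
    intro j h1 h2
    rcases le_or_gt j (q 2) with h | h
    · rw [hcstarle 2 j (by norm_num) le_rfl h1 h2 h]
    · have hrec := hcstargt 2 j (by norm_num) le_rfl h1 h2 h
      norm_num at hrec
      have := le_max_left (cstar 1 j) (cstar 2 (j - q 2))
      linarith
  -- stage 1 bound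
  have hL1 : ∀ j, 1 ≤ j → j ≤ n → c1 j ≤ cstar 1 j + p 1 := by
    intro j
    induction j using Nat.strong_induction_on with
    | _ j ih =>
      intro h1 h2
      rcases hc1 j h1 h2 with h | ⟨hb, h⟩
      · have := hcs1 j h1 h2; linarith
      · have hj1 : 1 ≤ j - q 1 := by omega
        have hjn : j - q 1 ≤ n := by omega
        have hlt : j - q 1 < j := by omega
        have := ih _ hlt hj1 hjn
        have hrec := hcstargt 1 j le_rfl (by norm_num) h1 h2 hb
        norm_num at hrec
        have hmax := le_max_right (cstar 0 j) (cstar 1 (j - q 1))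
        linarith
  -- main induction
  intro j
  induction j using Nat.strong_induction_on with
  | _ j ih =>
    intro h1 h2
    have hcs2' := hcs2 j h1 h2
    have hcs1' := hcs1 j h1 h2
    have hrj := hr0 j h1 h2
    rcases le_or_gt (c1 j) t with hle | hlt
    · rcases hc2early j h1 h2 hle with heq | ⟨hb, h⟩
      · rw [heq, ht]; nlinarith
      · have hj1 : 1 ≤ j - q 2 := by omega
        have hjn : j - q 2 ≤ n := by omega
        have hltj : j - q 2 < j := by omega
        have := ih _ hltj hj1 hjn
        have hrec := hcstargt 2 j (by norm_num) le_rfl h1 h2 hb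
        norm_num at hrec
        have hmax := le_max_right (cstar 1 j) (cstar 2 (j - q 2))
        linarith
    · rcases hc2late j h1 h2 hlt with h | ⟨hb, h⟩
      · have := hL1 j h1 h2; linarith
      · have hj1 : 1 ≤ j - q 2 := by omega
        have hjn : j - q 2 ≤ n := by omega
        have hltj : j - q 2 < j := by omega
        have := ih _ hltj hj1 hjn
        have hrec := hcstargt 2 j (by norm_num) le_rfl h1 h2 hb
        norm_num at hrec
        have hmax := le_max_right (cstar 1 j) (cstar 2 (j - q 2))
        linarith
end

section
/- Suppose s = 2, p_1 > 0, p_2 > 0, r_j ≥ 0 for all j, and let φ = (1+√5)/2 and t = φ·p_1 + (φ−1)·p_2. Let c_{1,j} and c_{2,j} (1 ≤ j ≤ n) be reals such that: (i) j ↦ c_{1,j} is nondecreasing; (ii) for every j there exists an integer k with c_{1,j} = t + k·p_1; (iii) for every j, either c_{1,j} ≤ r_j + 2·p_1, or j > q_1 and c_{1,j} ≤ c_{1,j−q_1} + p_1; (iv) for every j with c_{1,j} ≤ t, either c_{2,j} = t + p_2, or j > q_2 and c_{2,j} ≤ c_{2,j−q_2} + p_2; (v) for every j with c_{1,j} > t,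 either c_{2,j} ≤ c_{1,j} + 2·p_2, or j > q_2 and c_{2,j} ≤ c_{2,j−q_2} + p_2. Then c_{2,j} ≤ φ·c*_{2,j} for all 1 ≤ j ≤ n; consequently, for any feasible family (c'_{i,j}), c_{2,j} ≤ φ·c'_{2,j} for all j, so both the makespan and the total completion time of the produced schedule are at most φ times those of any feasible permutation schedule. (The t-Switch algorithm is φ-competitive for makespan and total completion time in a two-stage PFFB.) -/
/-- φ-competitiveness of the t-Switch algorithm for a two-stage PFFB:
with `φ = (1+√5)/2` and `t = φ p_1 + (φ−1) p_2`, under hypotheses (i)–(v) on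
the completion times `c_{1,·}, c_{2,·}` produced by the t-Switch algorithm,
`c_{2,j} ≤ φ·c*_{2,j}` for all jobs; consequently, for every feasible family
`c'`, `c_{2,j} ≤ φ·c'_{2,j}` for all `j`, and the makespan and total
completion time are at most `φ` times those of the feasible family. -/
theorem t_switch_phi_competitive
    (n : ℕ) (hn : 1 ≤ n)
    (p : ℕ → ℝ) (hp1 : 0 < p 1) (hp2 : 0 < p 2)
    (q : ℕ → ℕ) (hq : ∀ i, 1 ≤ i → i ≤ 2 → 1 ≤ q i)
    (r : ℕ → ℝ) (hr : ∀ j, 1 ≤ j → j < n → r j ≤ r (j + 1))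
    (hr0 : ∀ j, 1 ≤ j → j ≤ n → 0 ≤ r j)
    (cstar : ℕ → ℕ → ℝ)
    (hcstar0 : ∀ j, 1 ≤ j → j ≤ n → cstar 0 j = r j)
    (hcstarle : ∀ i j, 1 ≤ i → i ≤ 2 → 1 ≤ j → j ≤ n → j ≤ q i →
      cstar i j = cstar (i - 1) j + p i)
    (hcstargt : ∀ i j, 1 ≤ i → i ≤ 2 → 1 ≤ j → j ≤ n → q i < j →
      cstar i j = max (cstar (i - 1) j) (cstar i (j - q i)) + p i)
    (φ : ℝ) (hφ : φ = (1 + Real.sqrt 5) / 2)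
    (t : ℝ) (ht : t = φ * p 1 + (φ - 1) * p 2)
    (c1 c2 : ℕ → ℝ)
    (hc1mono : ∀ j j', 1 ≤ j → j ≤ j' → j' ≤ n → c1 j ≤ c1 j')
    (hc1inst : ∀ j, 1 ≤ j → j ≤ n → ∃ k : ℤ, c1 j = t + (k : ℝ) * p 1)
    (hc1 : ∀ j, 1 ≤ j → j ≤ n →
      c1 j ≤ r j + 2 * p 1 ∨ (q 1 < j ∧ c1 j ≤ c1 (j - q 1) + p 1))
    (hc2early : ∀ j, 1 ≤ j → j ≤ n → c1 j ≤ t →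
      c2 j = t + p 2 ∨ (q 2 < j ∧ c2 j ≤ c2 (j - q 2) + p 2))
    (hc2late : ∀ j, 1 ≤ j → j ≤ n → t < c1 j →
      c2 j ≤ c1 j + 2 * p 2 ∨ (q 2 < j ∧ c2 j ≤ c2 (j - q 2) + p 2)) :
    (∀ j, 1 ≤ j → j ≤ n → c2 j ≤ φ * cstar 2 j) ∧
    (∀ c' : ℕ → ℕ → ℝ,
      (∀ j, 1 ≤ j → j ≤ n → c' 0 j = r j) →
      (∀ i j, 1 ≤ i → i ≤ 2 → 1 ≤ j → j ≤ n → c' (i - 1) j + p i ≤ c' i j) →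
      (∀ i j, 1 ≤ i → i ≤ 2 → q i < j → j ≤ n → c' i (j - q i) + p i ≤ c' i j) →
      (∀ j, 1 ≤ j → j ≤ n → c2 j ≤ φ * c' 2 j) ∧
      (Finset.Icc 1 n).sup' (Finset.nonempty_Icc.mpr hn) (fun j => c2 j) ≤
        φ * (Finset.Icc 1 n).sup' (Finset.nonempty_Icc.mpr hn) (fun j => c' 2 j) ∧
      ∑ j ∈ Finset.Icc 1 n, c2 j ≤ φ * ∑ j ∈ Finset.Icc 1 n, c' 2 j) := by
  subst ht
  have s5 : Real.sqrt 5 ^ 2 = 5 := Real.sq_sqrt (by norm_num)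
  have s5lb : 2 ≤ Real.sqrt 5 := by nlinarith [Real.sqrt_nonneg 5]
  have hφ1 : (3:ℝ)/2 ≤ φ := by rw [hφ]; linarith
  have hφ2 : φ * φ = φ + 1 := by rw [hφ]; nlinarith
  have hφ0 : (0:ℝ) ≤ φ := by linarith
  have q1pos : 1 ≤ q 1 := hq 1 le_rfl (by norm_num)
  have q2pos : 1 ≤ q 2 := hq 2 (by norm_num) le_rfl
  -- basic lower bounds on cstar
  have F1 : ∀ j, 1 ≤ j → j ≤ n → r j + p 1 ≤ cstar 1 j := by
    intro j h1 h2
    by_cases h : j ≤ q 1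
    · have e := hcstarle 1 j le_rfl (by norm_num) h1 h2 h
      norm_num at e
      rw [e, hcstar0 j h1 h2]
    · have e := hcstargt 1 j le_rfl (by norm_num) h1 h2 (not_le.mp h)
      norm_num at e
      rw [hcstar0 j h1 h2] at e
      have hm := le_max_left (r j) (cstar 1 (j - q 1))
      linarith [add_le_add_right hm (p 1)]
  have F2 : ∀ j, 1 ≤ j → j ≤ n → cstar 1 j + p 2 ≤ cstar 2 j := by
    intro j h1 h2
    by_cases h : j ≤ q 2
    · have e := hcstarle 2 j (by norm_num) le_rfl h1 h2 h
      norm_num at e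
      rw [e]
    · have e := hcstargt 2 j (by norm_num) le_rfl h1 h2 (not_le.mp h)
      norm_num at e
      have hm := le_max_left (cstar 1 j) (cstar 2 (j - q 2))
      linarith [e.ge, add_le_add_right hm (p 2)]
  have F31 : ∀ j, q 1 < j → j ≤ n → cstar 1 (j - q 1) + p 1 ≤ cstar 1 j := by
    intro j hj h2
    have e := hcstargt 1 j le_rfl (by norm_num) (by omega) h2 hj
    have hm := le_max_right (cstar (1-1) j) (cstar 1 (j - q 1))
    linarith [add_le_add_right hm (p 1)]
  have F32 : ∀ j, q 2 < j → j ≤ n → cstar 2 (j - q 2) + p 2 ≤ cstar 2 j := by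
    intro j hj h2
    have e := hcstargt 2 j (by norm_num) le_rfl (by omega) h2 hj
    have hm := le_max_right (cstar (2-1) j) (cstar 2 (j - q 2))
    linarith [add_le_add_right hm (p 2)]
  -- Lemma 1: c1 j ≤ cstar 1 j + p 1
  have L1 : ∀ j, 1 ≤ j → j ≤ n → c1 j ≤ cstar 1 j + p 1 := by
    intro j
    induction j using Nat.strong_induction_on with
    | _ j ih =>
      intro h1 h2
      rcases hc1 j h1 h2 with h | ⟨hqj, h⟩
      · have := F1 j h1 h2; linarith
      · have hih := ih (j - q 1) (by omega) (by omega) (by omega)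
        have := F31 j hqj h2
        linarith
  -- Main lemma: c2 j ≤ φ * cstar 2 j
  have key : ∀ j, 1 ≤ j → j ≤ n → c2 j ≤ φ * cstar 2 j := by
    intro j
    induction j using Nat.strong_induction_on with
    | _ j ih =>
      intro h1 h2
      have hlow : r j + p 1 + p 2 ≤ cstar 2 j := by
        have := F1 j h1 h2; have := F2 j h1 h2; linarith
      have hrec : q 2 < j → c2 j ≤ c2 (j - q 2) + p 2 → c2 j ≤ φ * cstar 2 j := by
        intro hq2 hc
        have h32 := F32 j hq2 h2
        have ihj := ih (j - q 2) (by omega) (by omega) (by omega)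
        nlinarith [mul_le_mul_of_nonneg_left h32 hφ0, mul_nonneg (by linarith : (0:ℝ) ≤ φ - 1) hp2.le]
      by_cases hcase : c1 j ≤ φ * p 1 + (φ - 1) * p 2
      · rcases hc2early j h1 h2 hcase with h | ⟨hq2, hc⟩
        · have hr := hr0 j h1 h2
          have hmul := mul_le_mul_of_nonneg_left (show p 1 + p 2 ≤ cstar 2 j by linarith) hφ0
          rw [h]; nlinarith
        · exact hrec hq2 hc
      · push_neg at hcase
        rcases hc2late j h1 h2 hcase with h | ⟨hq2, hc⟩
        · obtain ⟨k, hk⟩ := hc1inst j h1 h2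
          have hk1 : (1:ℝ) ≤ (k:ℝ) := by
            have : (0:ℝ) < (k:ℝ) * p 1 := by nlinarith
            have hkpos : 0 < k := by
              by_contra hle
              push_neg at hle
              have : (k:ℝ) ≤ 0 := by exact_mod_cast hle
              nlinarith
            exact_mod_cast hkpos
          have hc1lb : φ * p 1 + (φ - 1) * p 2 + p 1 ≤ c1 j := by
            rw [hk]; nlinarith
          have hL := L1 j h1 h2
          have hF2 := F2 j h1 h2
          -- cstar 2 j ≥ c1 j - p1 + p2
          have hcs : c1 j - p 1 + p 2 ≤ cstar 2 j := by linarith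
          have hmul := mul_le_mul_of_nonneg_left hcs hφ0
          -- need: c1 j + 2 p2 ≤ φ (c1 j - p1 + p2), i.e. (φ-1) c1 j ≥ φ p1 + (2-φ) p2
          nlinarith [mul_nonneg (by linarith : (0:ℝ) ≤ φ - 1)
            (by linarith : (0:ℝ) ≤ c1 j - (φ * p 1 + (φ - 1) * p 2 + p 1))]
        · exact hrec hq2 hc
  refine ⟨key, ?_⟩
  intro c' h0 hstage hbatch
  -- feasible family dominates cstar
  have A1 : ∀ j, 1 ≤ j → j ≤ n → cstar 1 j ≤ c' 1 j := by
    intro j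
    induction j using Nat.strong_induction_on with
    | _ j ih =>
      intro h1 h2
      have hs := hstage 1 j le_rfl (by norm_num) h1 h2
      norm_num at hs
      by_cases h : j ≤ q 1
      · have e := hcstarle 1 j le_rfl (by norm_num) h1 h2 h
        norm_num at e
        rw [e, hcstar0 j h1 h2, ← h0 j h1 h2]; exact hs
      · have e := hcstargt 1 j le_rfl (by norm_num) h1 h2 (not_le.mp h)
        norm_num at e
        rw [e]
        have hb := hbatch 1 j le_rfl (by norm_num) (not_le.mp h) h2
        have hih := ih (j - q 1) (by omega) (by omega) (by omega)
        have h0j : cstar 0 j ≤ c' 0 j := by rw [hcstar0 j h1 h2, h0 j h1 h2]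
        rcases le_or_gt (cstar 0 j) (cstar 1 (j - q 1)) with hmx | hmx
        · rw [max_eq_right hmx]; linarith
        · rw [max_eq_left hmx.le]; linarith
  have A2 : ∀ j, 1 ≤ j → j ≤ n → cstar 2 j ≤ c' 2 j := by
    intro j
    induction j using Nat.strong_induction_on with
    | _ j ih =>
      intro h1 h2
      have hs := hstage 2 j (by norm_num) le_rfl h1 h2
      norm_num at hs
      by_cases h : j ≤ q 2
      · have e := hcstarle 2 j (by norm_num) le_rfl h1 h2 h
        norm_num at e
        rw [e]
        have := A1 j h1 h2
        linarith
      · have e := hcstargt 2 j (by norm_num) le_rfl h1 h2 (not_le.mp h)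
        norm_num at e
        rw [e]
        have hb := hbatch 2 j (by norm_num) le_rfl (not_le.mp h) h2
        have hih := ih (j - q 2) (by omega) (by omega) (by omega)
        have hA1 := A1 j h1 h2
        rcases le_or_gt (cstar 1 j) (cstar 2 (j - q 2)) with hmx | hmx
        · rw [max_eq_right hmx]; linarith
        · rw [max_eq_left hmx.le]; linarith
  have pt : ∀ j, 1 ≤ j → j ≤ n → c2 j ≤ φ * c' 2 j := by
    intro j h1 h2
    exact le_trans (key j h1 h2) (mul_le_mul_of_nonneg_left (A2 j h1 h2) hφ0)
  refine ⟨pt, ?_, ?_⟩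
  · apply Finset.sup'_le
    intro j hj
    rw [Finset.mem_Icc] at hj
    refine le_trans (pt j hj.1 hj.2) (mul_le_mul_of_nonneg_left ?_ hφ0)
    exact Finset.le_sup' (fun j => c' 2 j) (Finset.mem_Icc.mpr hj)
  · rw [Finset.mul_sum]
    apply Finset.sum_le_sum
    intro j hj
    rw [Finset.mem_Icc] at hj
    exact pt j hj.1 hj.2
end
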